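/- For every finite simple graph G of order n with minimum degree δ(G) ≥ 2, the double domination number satisfies γ×2(G) ≤ min{α(G), n − α(G)} + γ(G), where α(G) is the independence number and γ(G) is the domination number. -/

import Mathlib

/-! Basic domination-type definitions for finite simple graphs. -/

variable {V : Type*}

/-- The closed neighbourhood `N[v] = N(v) ∪ {v}`. -/
def closedNbhd (G : SimpleGraph V) (v : V) : Set V := insert v (G.neighborSet v)

/-- `D` is a dominating set: every vertex outside `D` has a neighbour in `D`. -/
def IsDomSet (G : SimpleGraph V) (D : Set V) : Prop := ∀ v ∉ D, ∃ u ∈ D, G.Adj u v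

/-- `D` is a double dominating set: `|N[v] ∩ D| ≥ 2` for every vertex `v`. -/
def IsDoubleDomSet (G : SimpleGraph V) (D : Set V) : Prop :=
  ∀ v : V, 2 ≤ (closedNbhd G v ∩ D).ncard

/-- `D` is a 2-dominating set: every vertex outside `D` has ≥ 2 neighbours in `D`. -/
def IsTwoDomSet (G : SimpleGraph V) (D : Set V) : Prop :=
  ∀ v ∉ D, 2 ≤ (G.neighborSet v ∩ D).ncard

/-- `D` is a total dominating set: every vertex has a neighbour in `D`. -/
def IsTotalDomSet (G : SimpleGraph V) (D : Set V) : Prop := ∀ v : V, ∃ u ∈ D, G.Adj u v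

/-- `S` is an independent set: no two vertices of `S` are adjacent. -/
def IsIndepSet' (G : SimpleGraph V) (S : Set V) : Prop := ∀ u ∈ S, ∀ v ∈ S, ¬ G.Adj u v

/-- `C` is a vertex cover: every edge has an endpoint in `C`. -/
def IsVertexCover (G : SimpleGraph V) (C : Set V) : Prop := ∀ u v, G.Adj u v → u ∈ C ∨ v ∈ C

/-- The domination number `γ(G)`. -/
noncomputable def domNum (G : SimpleGraph V) : ℕ :=
  sInf {k | ∃ D : Set V, IsDomSet G D ∧ D.ncard = k}

/-- The double domination number `γ×2(G)`. -/
noncomputable def ddomNum (G : SimpleGraph V) : ℕ :=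
  sInf {k | ∃ D : Set V, IsDoubleDomSet G D ∧ D.ncard = k}

/-- The 2-domination number `γ₂(G)`. -/
noncomputable def twoDomNum (G : SimpleGraph V) : ℕ :=
  sInf {k | ∃ D : Set V, IsTwoDomSet G D ∧ D.ncard = k}

/-- The total domination number `γt(G)`. -/
noncomputable def totalDomNum (G : SimpleGraph V) : ℕ :=
  sInf {k | ∃ D : Set V, IsTotalDomSet G D ∧ D.ncard = k}

/-- The vertex cover number `β(G)`. -/
noncomputable def vcNum (G : SimpleGraph V) : ℕ :=
  sInf {k | ∃ C : Set V, IsVertexCover G C ∧ C.ncard = k}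

/-- The independence number `α(G)`. -/
noncomputable def indepNum (G : SimpleGraph V) : ℕ :=
  sSup {k | ∃ S : Set V, IsIndepSet' G S ∧ S.ncard = k}

/-- The independent domination number `i(G)`. -/
noncomputable def indepDomNum (G : SimpleGraph V) : ℕ :=
  sInf {k | ∃ S : Set V, IsIndepSet' G S ∧ IsDomSet G S ∧ S.ncard = k}

/-- The set of leaves (vertices of degree one). -/
def leafSet (G : SimpleGraph V) : Set V := {v | (G.neighborSet v).ncard = 1}

/-- The set of support vertices (vertices adjacent to a leaf). -/
def supportSet (G : SimpleGraph V) : Set V := {v | ∃ u, G.Adj v u ∧ u ∈ leafSet G}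


section Aux

variable {V : Type*} [Fintype V]

private lemma two_le_ncard_of_pair {s : Set V} {x y : V} (hx : x ∈ s) (hy : y ∈ s)
    (hxy : x ≠ y) : 2 ≤ s.ncard := by
  have := (Set.one_lt_ncard_iff s.toFinite).2 ⟨x, y, hx, hy, hxy⟩
  omega

private lemma exists_pair_of_two_le {s : Set V} (h : 2 ≤ s.ncard) :
    ∃ a b, a ∈ s ∧ b ∈ s ∧ a ≠ b :=
  (Set.one_lt_ncard_iff s.toFinite).1 (by omega)

private lemma ncard_le_card' (s : Set V) : s.ncard ≤ Fintype.card V := by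
  have := Set.ncard_le_ncard (Set.subset_univ s) Set.finite_univ
  rwa [Set.ncard_univ, Nat.card_eq_fintype_card] at this

private lemma indep_ncard_le {G : SimpleGraph V} {S : Set V} (hS : IsIndepSet' G S) :
    S.ncard ≤ indepNum G :=
  le_csSup ⟨Fintype.card V, fun k hk => by obtain ⟨T, _, rfl⟩ := hk; exact ncard_le_card' T⟩
    ⟨S, hS, rfl⟩

private lemma exists_max_indep (G : SimpleGraph V) :
    ∃ S : Set V, IsIndepSet' G S ∧ S.ncard = indepNum G := by
  have h : indepNum G ∈ {k | ∃ S : Set V, IsIndepSet' G S ∧ S.ncard = k} :=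
    Nat.sSup_mem ⟨0, ∅, fun u hu => absurd hu (by simp), by simp⟩
      ⟨Fintype.card V, fun k hk => by obtain ⟨T, _, rfl⟩ := hk; exact ncard_le_card' T⟩
  obtain ⟨S, h1, h2⟩ := h
  exact ⟨S, h1, h2⟩

private lemma exists_min_dom (G : SimpleGraph V) :
    ∃ D : Set V, IsDomSet G D ∧ D.ncard = domNum G := by
  have h : domNum G ∈ {k | ∃ D : Set V, IsDomSet G D ∧ D.ncard = k} :=
    Nat.sInf_mem ⟨(Set.univ : Set V).ncard, Set.univ,
      fun v hv => absurd (Set.mem_univ v) hv, rfl⟩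
  obtain ⟨D, h1, h2⟩ := h
  exact ⟨D, h1, h2⟩

private lemma ddom_le {G : SimpleGraph V} {M : Set V} (hM : IsDoubleDomSet G M) :
    ddomNum G ≤ M.ncard := Nat.sInf_le ⟨M, hM, rfl⟩

/-- A maximum independent set is dominating. -/
private lemma max_indep_dom {G : SimpleGraph V} {S : Set V} (hS : IsIndepSet' G S)
    (hc : S.ncard = indepNum G) {v : V} (hv : v ∉ S) : ∃ u ∈ S, G.Adj u v := by
  by_contra h
  push_neg at h
  have hind : IsIndepSet' G (insert v S) := by
    intro a ha b hb hab
    rcases ha with rfl | ha <;> rcases hb with rfl | hb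
    · exact G.irrefl hab
    · exact h b hb hab.symm
    · exact h a ha hab
    · exact hS a ha b hb hab
  have := indep_ncard_le hind
  rw [Set.ncard_insert_of_notMem hv S.toFinite, hc] at this
  omega

private lemma neighbor_mem_closed {G : SimpleGraph V} {v u : V} (h : G.Adj v u) :
    u ∈ closedNbhd G v := Set.mem_insert_iff.mpr (Or.inr h)

private lemma self_mem_closed (G : SimpleGraph V) (v : V) : v ∈ closedNbhd G v :=
  Set.mem_insert _ _

/-- The `n - α` branch. -/
private lemma bound_beta {G : SimpleGraph V} (hdeg : ∀ v : V, 2 ≤ (G.neighborSet v).ncard) :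
    ddomNum G ≤ (Fintype.card V - indepNum G) + domNum G := by
  obtain ⟨S, hSi, hSc⟩ := exists_max_indep G
  obtain ⟨D, hDdom, hDc⟩ := exists_min_dom G
  have hg' : ∀ w : V, ∃ u, G.Adj w u := by
    intro w
    obtain ⟨a, b, ha, _, _⟩ := exists_pair_of_two_le (hdeg w)
    exact ⟨a, ha⟩
  set g : V → V := fun w => (hg' w).choose with hgdef
  have hgadj : ∀ w, G.Adj w (g w) := fun w => (hg' w).choose_spec
  set Q : Set V := Sᶜ with hQdef
  set P : Set V := {v | v ∈ D ∧ v ∉ S ∧ G.neighborSet v ∩ (Q ∪ D) = ∅} with hPdef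
  set M : Set V := Q ∪ D ∪ g '' P with hMdef
  have hMd : IsDoubleDomSet G M := by
    intro v
    by_cases hvS : v ∈ S
    · obtain ⟨a, b, ha, hb, hab⟩ := exists_pair_of_two_le (hdeg v)
      have haQ : a ∈ Q := fun haS => hSi v hvS a haS ha
      have hbQ : b ∈ Q := fun hbS => hSi v hvS b hbS hb
      exact two_le_ncard_of_pair ⟨neighbor_mem_closed ha, Or.inl (Or.inl haQ)⟩
        ⟨neighbor_mem_closed hb, Or.inl (Or.inl hbQ)⟩ hab
    · have hvM : v ∈ closedNbhd G v ∩ M := ⟨self_mem_closed G v, Or.inl (Or.inl hvS)⟩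
      by_cases hvD : v ∈ D
      · rcases Set.eq_empty_or_nonempty (G.neighborSet v ∩ (Q ∪ D)) with hemp | ⟨u, hu1, hu2⟩
        · have hvP : v ∈ P := ⟨hvD, hvS, hemp⟩
          exact two_le_ncard_of_pair hvM
            ⟨neighbor_mem_closed (hgadj v), Or.inr ⟨v, hvP, rfl⟩⟩ (G.ne_of_adj (hgadj v))
        · exact two_le_ncard_of_pair hvM
            ⟨neighbor_mem_closed hu1, Or.inl hu2⟩ (G.ne_of_adj hu1)
      · obtain ⟨u, huD, hadj⟩ := hDdom v hvD
        exact two_le_ncard_of_pair hvM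
          ⟨neighbor_mem_closed hadj.symm, Or.inl (Or.inr huD)⟩ (G.ne_of_adj hadj.symm)
  have h1 : ddomNum G ≤ M.ncard := ddom_le hMd
  have h2 : M.ncard ≤ (Q ∪ D).ncard + (g '' P).ncard := Set.ncard_union_le _ _
  have h3 : (g '' P).ncard ≤ P.ncard := Set.ncard_image_le P.toFinite
  have h4 : (Q ∪ D).ncard + (Q ∩ D).ncard = Q.ncard + D.ncard :=
    Set.ncard_union_add_ncard_inter Q D Q.toFinite D.toFinite
  have h5 : P.ncard ≤ (Q ∩ D).ncard :=
    Set.ncard_le_ncard (fun v hv => ⟨hv.2.1, hv.1⟩) (Q ∩ D).toFinite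
  have h6 : S.ncard + Q.ncard = Fintype.card V := by
    have := Set.ncard_add_ncard_compl S S.toFinite Sᶜ.toFinite
    rwa [Nat.card_eq_fintype_card] at this
  omega

/-- The `α` branch. -/
private lemma bound_alpha {G : SimpleGraph V} (hdeg : ∀ v : V, 2 ≤ (G.neighborSet v).ncard) :
    ddomNum G ≤ indepNum G + domNum G := by
  obtain ⟨D, hDdom, hDc⟩ := exists_min_dom G
  have hg' : ∀ w : V, ∃ u, G.Adj w u := by
    intro w
    obtain ⟨a, b, ha, _, _⟩ := exists_pair_of_two_le (hdeg w)
    exact ⟨a, ha⟩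
  set g : V → V := fun w => (hg' w).choose with hgdef
  have hgadj : ∀ w, G.Adj w (g w) := fun w => (hg' w).choose_spec
  -- choose a maximum independent set minimizing |S ∩ D|
  set T : Set ℕ := {k | ∃ S : Set V, IsIndepSet' G S ∧ S.ncard = indepNum G ∧
    (S ∩ D).ncard = k} with hTdef
  have hTne : T.Nonempty := by
    obtain ⟨S, h1, h2⟩ := exists_max_indep G
    exact ⟨(S ∩ D).ncard, S, h1, h2, rfl⟩
  obtain ⟨S, hSi, hSc, hSm⟩ := Nat.sInf_mem hTne
  -- key: every vertex outside S ∪ D has two distinct neighbours in S ∪ D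
  have hkey : ∀ v, v ∉ S → v ∉ D →
      ∃ a b, a ∈ G.neighborSet v ∩ (S ∪ D) ∧ b ∈ G.neighborSet v ∩ (S ∪ D) ∧ a ≠ b := by
    intro v hvS hvD
    obtain ⟨s, hsS, hsadj⟩ := max_indep_dom hSi hSc hvS
    obtain ⟨d, hdD, hdadj⟩ := hDdom v hvD
    by_cases hsd : s ≠ d
    · exact ⟨s, d, ⟨hsadj.symm, Or.inl hsS⟩, ⟨hdadj.symm, Or.inr hdD⟩, hsd⟩
    push_neg at hsd
    subst hsd
    by_cases hex : ∃ a ∈ G.neighborSet v ∩ (S ∪ D), a ≠ s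
    · obtain ⟨a, ha, hane⟩ := hex
      exact ⟨a, s, ha, ⟨hsadj.symm, Or.inl hsS⟩, hane⟩
    push_neg at hex
    -- exchange argument: swap s for v
    exfalso
    set S' : Set V := insert v (S \ {s}) with hS'def
    have hS'i : IsIndepSet' G S' := by
      intro a ha b hb hab
      rcases ha with rfl | ⟨haS, hane⟩ <;> rcases hb with rfl | ⟨hbS, hbne⟩
      · exact G.irrefl hab
      · exact hbne (hex b ⟨hab, Or.inl hbS⟩)
      · exact hane (hex a ⟨hab.symm, Or.inl haS⟩)
      · exact hSi a haS b hbS hab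
    have hSpos : 1 ≤ S.ncard := (Set.ncard_pos S.toFinite).2 ⟨s, hsS⟩
    have hS'c : S'.ncard = indepNum G := by
      rw [hS'def, Set.ncard_insert_of_notMem (fun h => hvS h.1) (S \ {s}).toFinite,
        Set.ncard_diff_singleton_of_mem hsS]
      omega
    have hS'D : S' ∩ D = (S ∩ D) \ {s} := by
      ext x
      constructor
      · rintro ⟨rfl | ⟨hxS, hxne⟩, hxD⟩
        · exact absurd hxD hvD
        · exact ⟨⟨hxS, hxD⟩, hxne⟩
      · rintro ⟨⟨hxS, hxD⟩, hxne⟩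
        exact ⟨Or.inr ⟨hxS, hxne⟩, hxD⟩
    have hmpos : 1 ≤ (S ∩ D).ncard := (Set.ncard_pos (S ∩ D).toFinite).2 ⟨s, hsS, hdD⟩
    have hle : sInf T ≤ (S ∩ D).ncard - 1 := by
      apply Nat.sInf_le
      refine ⟨S', hS'i, hS'c, ?_⟩
      rw [hS'D, Set.ncard_diff_singleton_of_mem (Set.mem_inter hsS hdD)]
    omega
  set P : Set V := {w | w ∈ S ∧ w ∈ D ∧ G.neighborSet w ∩ (S ∪ D) = ∅} with hPdef
  set M : Set V := S ∪ D ∪ g '' P with hMdef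
  have hMd : IsDoubleDomSet G M := by
    intro v
    by_cases hvS : v ∈ S
    · have hvM : v ∈ closedNbhd G v ∩ M := ⟨self_mem_closed G v, Or.inl (Or.inl hvS)⟩
      by_cases hvD : v ∈ D
      · rcases Set.eq_empty_or_nonempty (G.neighborSet v ∩ (S ∪ D)) with hemp | ⟨u, hu1, hu2⟩
        · have hvP : v ∈ P := ⟨hvS, hvD, hemp⟩
          exact two_le_ncard_of_pair hvM
            ⟨neighbor_mem_closed (hgadj v), Or.inr ⟨v, hvP, rfl⟩⟩ (G.ne_of_adj (hgadj v))
        · exact two_le_ncard_of_pair hvM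
            ⟨neighbor_mem_closed hu1, Or.inl hu2⟩ (G.ne_of_adj hu1)
      · obtain ⟨u, huD, hadj⟩ := hDdom v hvD
        exact two_le_ncard_of_pair hvM
          ⟨neighbor_mem_closed hadj.symm, Or.inl (Or.inr huD)⟩ (G.ne_of_adj hadj.symm)
    · by_cases hvD : v ∈ D
      · have hvM : v ∈ closedNbhd G v ∩ M := ⟨self_mem_closed G v, Or.inl (Or.inr hvD)⟩
        obtain ⟨u, huS, hadj⟩ := max_indep_dom hSi hSc hvS
        exact two_le_ncard_of_pair hvM
          ⟨neighbor_mem_closed hadj.symm, Or.inl (Or.inl huS)⟩ (G.ne_of_adj hadj.symm)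
      · obtain ⟨a, b, ⟨ha1, ha2⟩, ⟨hb1, hb2⟩, hab⟩ := hkey v hvS hvD
        exact two_le_ncard_of_pair ⟨neighbor_mem_closed ha1, Or.inl ha2⟩
          ⟨neighbor_mem_closed hb1, Or.inl hb2⟩ hab
  have h1 : ddomNum G ≤ M.ncard := ddom_le hMd
  have h2 : M.ncard ≤ (S ∪ D).ncard + (g '' P).ncard := Set.ncard_union_le _ _
  have h3 : (g '' P).ncard ≤ P.ncard := Set.ncard_image_le P.toFinite
  have h4 : (S ∪ D).ncard + (S ∩ D).ncard = S.ncard + D.ncard :=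
    Set.ncard_union_add_ncard_inter S D S.toFinite D.toFinite
  have h5 : P.ncard ≤ (S ∩ D).ncard :=
    Set.ncard_le_ncard (fun v hv => ⟨hv.1, hv.2.1⟩) (S ∩ D).toFinite
  omega

end Aux

/-- For every finite simple graph `G` of order `n` with minimum degree `δ(G) ≥ 2`,
`γ×2(G) ≤ min {α(G), n − α(G)} + γ(G)`. -/
theorem stmt3 {V : Type*} [Fintype V] (G : SimpleGraph V)
    (hdeg : ∀ v : V, 2 ≤ (G.neighborSet v).ncard) :
    ddomNum G ≤ min (indepNum G) (Fintype.card V - indepNum G) + domNum G := by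
  rcases min_cases (indepNum G) (Fintype.card V - indepNum G) with ⟨h1, _⟩ | ⟨h1, _⟩
  · rw [h1]; exact bound_alpha hdeg
  · rw [h1]; exact bound_beta hdeg
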